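/- For permutations π, σ in S_n, π ≤ σ in the Bruhat order if and only if for all k, ℓ, the rank of the upper-left k×ℓ submatrix of the permutation matrix of π is greater than or equal to the rank of the upper-left k×ℓ submatrix of the permutation matrix of σ. -/

import Mathlib

open Matrix

/-- The upper-left `k × l` corner of a matrix (truncated at the matrix size). -/
def cornerSub {F : Type*} {n m : ℕ} (X : Matrix (Fin n) (Fin m) F) (k l : ℕ) :
    Matrix (Fin (min k n)) (Fin (min l m)) F :=
  X.submatrix (Fin.castLE (min_le_right k n)) (Fin.castLE (min_le_right l m))

/-- The `(k, l)` entry of the rank-control matrix. -/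
noncomputable def rcEntry {F : Type*} [Field F] {n m : ℕ}
    (X : Matrix (Fin n) (Fin m) F) (k l : ℕ) : ℕ :=
  (cornerSub X k l).rank

/-- The permutation matrix of `π`: entry `(i, j)` is `1` iff `π j = i`. -/
def permMatrix {n : ℕ} (π : Equiv.Perm (Fin n)) : Matrix (Fin n) (Fin n) ℚ :=
  Matrix.of fun i j => if π j = i then 1 else 0

/-- The number of inversions of a permutation. -/
def invNum {n : ℕ} (π : Equiv.Perm (Fin n)) : ℕ :=
  (Finset.univ.filter fun p : Fin n × Fin n => p.1 < p.2 ∧ π p.2 < π p.1).card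

/-- The Bruhat (strong) order on `S_n`: `π ≤ σ` iff `σ` can be obtained from `π`
by successively multiplying by transpositions, each step increasing the number
of inversions (equivalently, the Coxeter length). -/
def bruhatLE {n : ℕ} (π σ : Equiv.Perm (Fin n)) : Prop :=
  Relation.ReflTransGen
    (fun a b => (∃ i j : Fin n, i ≠ j ∧ b = a * Equiv.swap i j) ∧ invNum a < invNum b)
    π σ

namespace Stmt10Aux

open Finset

variable {n : ℕ}

/-- count of dots in the upper-left `k × l` region -/
def cnt (π : Equiv.Perm (Fin n)) (k l : ℕ) : ℕ :=
  ∑ q : Fin n, if (q : ℕ) < l ∧ ((π q : ℕ)) < k then 1 else 0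

lemma sum_shift_one (f g : Fin n → ℕ) (i : Fin n) (h : ∀ q, q ≠ i → f q = g q) :
    (∑ q, f q) + g i = (∑ q, g q) + f i := by
  rw [← Finset.add_sum_erase _ f (mem_univ i), ← Finset.add_sum_erase _ g (mem_univ i)]
  rw [Finset.sum_congr rfl (fun q hq => h q (Finset.ne_of_mem_erase hq))]
  ring

lemma sum_shift_two (f g : Fin n → ℕ) (i j : Fin n) (hij : i ≠ j)
    (h : ∀ q, q ≠ i → q ≠ j → f q = g q) :
    (∑ q, f q) + g i + g j = (∑ q, g q) + f i + f j := by
  have hj : j ∈ univ.erase i := Finset.mem_erase.2 ⟨hij.symm, mem_univ j⟩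
  rw [← Finset.add_sum_erase _ f (mem_univ i), ← Finset.add_sum_erase _ g (mem_univ i),
    ← Finset.add_sum_erase _ f hj, ← Finset.add_sum_erase _ g hj]
  rw [Finset.sum_congr rfl (fun q hq => h q (Finset.ne_of_mem_erase (Finset.mem_of_mem_erase hq))
    (Finset.ne_of_mem_erase hq))]
  ring

lemma cnt_mul_swap (π : Equiv.Perm (Fin n)) (i j : Fin n) (k l : ℕ) :
    cnt (π * Equiv.swap i j) k l
      = ∑ r : Fin n, if ((Equiv.swap i j r : Fin n) : ℕ) < l ∧ ((π r : ℕ)) < k then 1 else 0 := by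
  unfold cnt
  apply Fintype.sum_equiv (Equiv.swap i j)
  intro r
  simp [Equiv.Perm.mul_apply, Equiv.swap_apply_self]
  exact if_congr Iff.rfl rfl rfl

/-! ### Inversion count increases under a raising transposition -/

def Fm (i j : Fin n) (P : Fin n × Fin n) : Fin n × Fin n :=
  (if i < P.2 ∧ P.2 < j then P.1 else Equiv.swap i j P.1,
   if i < P.1 ∧ P.1 < j then P.2 else Equiv.swap i j P.2)

lemma swap_mem_Ioo (i j x : Fin n) :
    (i < Equiv.swap i j x ∧ Equiv.swap i j x < j) ↔ (i < x ∧ x < j) := by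
  rcases eq_or_ne x i with rfl | hxi
  · simp [Equiv.swap_apply_left]
  rcases eq_or_ne x j with rfl | hxj
  · simp [Equiv.swap_apply_right]
  · rw [Equiv.swap_apply_of_ne_of_ne hxi hxj]

lemma Fm_invol (i j : Fin n) (P : Fin n × Fin n) : Fm i j (Fm i j P) = P := by
  obtain ⟨p, q⟩ := P
  simp only [Fm]
  by_cases hA : i < q ∧ q < j <;> by_cases hB : i < p ∧ p < j <;>
    simp [hA, hB, swap_mem_Ioo, Equiv.swap_apply_self]

lemma Fm_inj (i j : Fin n) : Function.Injective (Fm i j) :=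
  Function.LeftInverse.injective (Fm_invol i j)

lemma invNum_lt_swap (c : Equiv.Perm (Fin n)) (i j : Fin n) (hij : i < j)
    (hc : c i < c j) : invNum c < invNum (c * Equiv.swap i j) := by
  classical
  set d := c * Equiv.swap i j with hd_def
  have hd : ∀ x, d x = c (Equiv.swap i j x) := fun x => rfl
  have hdi : d i = c j := by rw [hd, Equiv.swap_apply_left]
  have hdj : d j = c i := by rw [hd, Equiv.swap_apply_right]
  have hdo : ∀ x, x ≠ i → x ≠ j → d x = c x := fun x h1 h2 => by
    rw [hd, Equiv.swap_apply_of_ne_of_ne h1 h2]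
  set Sc := (Finset.univ.filter fun p : Fin n × Fin n => p.1 < p.2 ∧ c p.2 < c p.1) with hSc
  set Sd := (Finset.univ.filter fun p : Fin n × Fin n => p.1 < p.2 ∧ d p.2 < d p.1) with hSd
  have hijSd : (i, j) ∈ Sd := by
    rw [hSd, Finset.mem_filter]
    exact ⟨mem_univ _, hij, by rw [hdi, hdj]; exact hc⟩
  have hmem : ∀ P ∈ Sc, Fm i j P ∈ Sd := by
    rintro ⟨p, q⟩ hP
    rw [hSc, Finset.mem_filter] at hP
    obtain ⟨-, hpq, hv⟩ := hP
    simp only at hpq hv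
    rw [hSd, Finset.mem_filter]
    refine ⟨mem_univ _, ?_⟩
    simp only [Fm]
    by_cases hpi : p = i
    · subst hpi
      have hqj : q ≠ j := fun h => absurd hc (not_lt.2 (h ▸ hv).le)
      have hqi : q ≠ p := hpq.ne'
      have hsq : Equiv.swap p j q = q := Equiv.swap_apply_of_ne_of_ne hqi hqj
      rcases lt_or_ge q j with hq | hq
      · rw [if_pos ⟨hpq, hq⟩, if_neg (by simp), hsq]
        exact ⟨hpq, by rw [hdo q hqi hqj, hdi]; exact hv.trans hc⟩
      · have hjq : j < q := lt_of_le_of_ne hq (Ne.symm hqj)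
        rw [if_neg (fun h => absurd h.2 (not_lt.2 hq)), if_neg (by simp), hsq,
          Equiv.swap_apply_left]
        exact ⟨hjq, by rw [hdo q hqi hqj, hdj]; exact hv⟩
    · by_cases hpj : p = j
      · subst hpj
        have hjq : p < q := hpq
        have hqi : q ≠ i := fun h => absurd (h ▸ hpq) (not_lt.2 (le_of_lt hij))
        have hqj : q ≠ p := hpq.ne'
        rw [if_neg (fun h => absurd h.2 (not_lt.2 hpq.le)),
          if_neg (by simp), Equiv.swap_apply_right,
          Equiv.swap_apply_of_ne_of_ne hqi hqj]
        exact ⟨hij.trans hjq, by rw [hdo q hqi hqj, hdi]; exact hv⟩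
      · by_cases hqi : q = i
        · subst hqi
          rw [if_neg (by simp), if_neg (fun h => absurd (hpq.trans h.1) (lt_irrefl _)),
            Equiv.swap_apply_of_ne_of_ne hpi hpj, Equiv.swap_apply_left]
          exact ⟨hpq.trans hij, by rw [hdj, hdo p hpi hpj]; exact hv⟩
        · by_cases hqj : q = j
          · subst hqj
            rw [if_neg (by simp), Equiv.swap_apply_of_ne_of_ne hpi hpj]
            rcases lt_or_ge i p with hip | hip
            · rw [if_pos ⟨hip, hpq⟩]
              exact ⟨hpq, by
                rw [hd, Equiv.swap_apply_right, hdo p hpi hpj]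
                exact hc.trans hv⟩
            · have hpi' : p < i := lt_of_le_of_ne hip hpi
              rw [if_neg (fun h => absurd h.1 (not_lt.2 hip)), Equiv.swap_apply_right]
              exact ⟨hpi', by rw [hdi, hdo p hpi hpj]; exact hv⟩
          · have h1 : (if i < q ∧ q < j then p else Equiv.swap i j p) = p := by
              split_ifs with h
              · rfl
              · exact Equiv.swap_apply_of_ne_of_ne hpi hpj
            have h2 : (if i < p ∧ p < j then q else Equiv.swap i j q) = q := by
              split_ifs with h
              · rfl
              · exact Equiv.swap_apply_of_ne_of_ne hqi hqj
            rw [h1, h2]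
            exact ⟨hpq, by rw [hdo q hqi hqj, hdo p hpi hpj]; exact hv⟩
  have hne : ∀ P ∈ Sc, Fm i j P ≠ (i, j) := by
    intro P hP hEq
    have hPij : P = Fm i j (i, j) := by rw [← hEq, Fm_invol]
    have hFij : Fm i j (i, j) = (j, i) := by
      simp only [Fm]
      rw [if_neg (by simp), if_neg (by simp), Equiv.swap_apply_left, Equiv.swap_apply_right]
    rw [hFij] at hPij
    subst hPij
    rw [hSc, Finset.mem_filter] at hP
    exact absurd (hij.trans hP.2.1) (lt_irrefl _)
  have himg : Sc.image (Fm i j) ⊆ Sd.erase (i, j) := by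
    intro x hx
    obtain ⟨P, hP, rfl⟩ := Finset.mem_image.1 hx
    exact Finset.mem_erase.2 ⟨hne P hP, hmem P hP⟩
  have h1 : Sc.card = (Sc.image (Fm i j)).card :=
    (Finset.card_image_of_injective _ (Fm_inj i j)).symm
  have h2 : (Sc.image (Fm i j)).card ≤ (Sd.erase (i, j)).card := Finset.card_le_card himg
  have h3 : (Sd.erase (i, j)).card = Sd.card - 1 := Finset.card_erase_of_mem hijSd
  have h4 : 1 ≤ Sd.card := Finset.card_pos.2 ⟨_, hijSd⟩
  show Sc.card < Sd.card
  omega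

/-! ### rank of the corner = count -/

lemma rcEntry_permMatrix (π : Equiv.Perm (Fin n)) (k l : ℕ) :
    rcEntry (permMatrix π) k l = cnt π k l := by
  classical
  set B := cornerSub (permMatrix π) k l with hBdef
  have hB : ∀ (i : Fin (min k n)) (j : Fin (min l n)),
      B i j = if π (Fin.castLE (min_le_right l n) j) = Fin.castLE (min_le_right k n) i
        then 1 else 0 := fun i j => rfl
  set T : Finset (Fin (min l n)) :=
    univ.filter (fun j => ((π (Fin.castLE (min_le_right l n) j) : ℕ) < min k n)) with hT
  have hmemT : ∀ j, j ∈ T ↔ ((π (Fin.castLE (min_le_right l n) j) : ℕ) < min k n) := by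
    intro j; rw [hT, Finset.mem_filter]; simp
  set fv : {x // x ∈ T} → Fin (min k n) :=
    fun x => ⟨(π (Fin.castLE (min_le_right l n) x.1) : ℕ), (hmemT x.1).1 x.2⟩ with hfv
  have fv_inj : Function.Injective fv := by
    intro a b hab
    have h1 := congrArg Fin.val hab
    have h2 : π (Fin.castLE (min_le_right l n) a.1) = π (Fin.castLE (min_le_right l n) b.1) :=
      Fin.ext h1
    have h3 := π.injective h2
    exact Subtype.ext (Fin.castLE_injective _ h3)
  have hcolT : ∀ x : {x // x ∈ T}, Bᵀ x.1 = (Pi.single (fv x) (1 : ℚ) : Fin (min k n) → ℚ) := by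
    intro x
    funext i
    rw [Matrix.transpose_apply, hB, Pi.single_apply]
    refine if_congr ?_ rfl rfl
    constructor
    · intro h
      have := congrArg Fin.val h
      exact (Fin.ext this.symm : i = fv x)
    · intro h
      subst h
      exact Fin.ext rfl
  have hcol0 : ∀ j, j ∉ T → Bᵀ j = 0 := by
    intro j hj
    funext i
    rw [Matrix.transpose_apply, hB]
    rw [if_neg]
    · rfl
    · intro h
      apply hj
      rw [hmemT]
      have := congrArg Fin.val h
      rw [this]
      exact i.2
  have hspan : Submodule.span ℚ (Set.range Bᵀ)
      = Submodule.span ℚ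
        (Set.range fun x : {x // x ∈ T} => (Pi.single (fv x) (1 : ℚ) : Fin (min k n) → ℚ)) := by
    apply le_antisymm
    · rw [Submodule.span_le]
      rintro _ ⟨j, rfl⟩
      by_cases hj : j ∈ T
      · apply Submodule.subset_span
        exact ⟨⟨j, hj⟩, (hcolT ⟨j, hj⟩).symm⟩
      · rw [hcol0 j hj]; exact Submodule.zero_mem _
    · rw [Submodule.span_le]
      rintro _ ⟨x, rfl⟩
      show (Pi.single (fv x) (1 : ℚ) : Fin (min k n) → ℚ) ∈ _
      rw [← hcolT x]
      exact Submodule.subset_span ⟨x.1, rfl⟩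
  have hlin : LinearIndependent ℚ
      (fun x : {x // x ∈ T} => (Pi.single (fv x) (1 : ℚ) : Fin (min k n) → ℚ)) := by
    have h := (Pi.basisFun ℚ (Fin (min k n))).linearIndependent.comp fv fv_inj
    have he : (fun x : {x // x ∈ T} => (Pi.single (fv x) (1 : ℚ) : Fin (min k n) → ℚ))
        = (Pi.basisFun ℚ (Fin (min k n))) ∘ fv := by
      funext x
      simp [Pi.basisFun_apply]
    rw [he]
    exact h
  have hrank : B.rank = T.card := by
    rw [Matrix.rank_eq_finrank_span_cols, show Set.range B.col = Set.range Bᵀ from rfl, hspan, finrank_span_eq_card hlin,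
      Fintype.card_coe]
  have hcnt : cnt π k l = T.card := by
    have himg : (univ.filter fun q : Fin n => (q : ℕ) < l ∧ ((π q : ℕ)) < k)
        = T.image (Fin.castLE (min_le_right l n)) := by
      ext q
      simp only [Finset.mem_filter, Finset.mem_image, mem_univ, true_and, hmemT]
      constructor
      · rintro ⟨h1, h2⟩
        refine ⟨⟨(q : ℕ), lt_min h1 q.2⟩, ?_, Fin.ext rfl⟩
        have hc : Fin.castLE (min_le_right l n) (⟨(q : ℕ), lt_min h1 q.2⟩ : Fin (min l n)) = q :=
          Fin.ext rfl
        rw [hc]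
        exact lt_min h2 (π q).2
      · rintro ⟨j, hj, rfl⟩
        refine ⟨lt_of_lt_of_le j.2 (min_le_left l n), lt_of_lt_of_le hj (min_le_left k n)⟩
    rw [cnt, ← Finset.card_filter, himg,
      Finset.card_image_of_injective _ (Fin.castLE_injective _)]
  rw [rcEntry, ← hBdef, hrank, hcnt]

/-! ### counting lemmas -/

lemma cnt_swap_le (c : Equiv.Perm (Fin n)) (i j : Fin n) (hij : i < j) (hc : c i < c j)
    (k l : ℕ) : cnt (c * Equiv.swap i j) k l ≤ cnt c k l := by
  rw [cnt_mul_swap]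
  unfold cnt
  set f : Fin n → ℕ :=
    fun r => if ((Equiv.swap i j r : Fin n) : ℕ) < l ∧ ((c r : ℕ)) < k then 1 else 0 with hf
  set g : Fin n → ℕ := fun r => if (r : ℕ) < l ∧ ((c r : ℕ)) < k then 1 else 0 with hg
  have key : (∑ r, f r) + g i + g j = (∑ r, g r) + f i + f j :=
    sum_shift_two f g i j hij.ne (fun q h1 h2 => by
      simp only [hf, hg, Equiv.swap_apply_of_ne_of_ne h1 h2])
  have hij' : (i : ℕ) < (j : ℕ) := hij
  have hc' : ((c i : ℕ)) < ((c j : ℕ)) := hc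
  have e1 : f i = (if (j : ℕ) < l ∧ ((c i : ℕ)) < k then 1 else 0) := by
    simp only [hf, Equiv.swap_apply_left]
  have e2 : f j = (if (i : ℕ) < l ∧ ((c j : ℕ)) < k then 1 else 0) := by
    simp only [hf, Equiv.swap_apply_right]
  have e3 : g i = (if (i : ℕ) < l ∧ ((c i : ℕ)) < k then 1 else 0) := rfl
  have e4 : g j = (if (j : ℕ) < l ∧ ((c j : ℕ)) < k then 1 else 0) := rfl
  have hfij : f i + f j ≤ g i + g j := by
    rw [e1, e2, e3, e4]
    split_ifs <;> omega
  show (∑ r, f r) ≤ ∑ r, g r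
  omega

lemma cnt_prefix (π σ : Equiv.Perm (Fin n)) (k l : ℕ)
    (h : ∀ q : Fin n, (q : ℕ) < l → π q = σ q) : cnt π k l = cnt σ k l := by
  unfold cnt
  apply Finset.sum_congr rfl
  intro q _
  by_cases hq : (q : ℕ) < l
  · rw [h q hq]
  · simp [hq]

lemma cnt_split (π : Equiv.Perm (Fin n)) {k K : ℕ} (hkK : k ≤ K) (l : ℕ) :
    cnt π K l = cnt π k l
      + ∑ q : Fin n, if (q : ℕ) < l ∧ k ≤ ((π q : ℕ)) ∧ ((π q : ℕ)) < K then 1 else 0 := by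
  unfold cnt
  rw [← Finset.sum_add_distrib]
  apply Finset.sum_congr rfl
  intro q _
  split_ifs <;> omega

lemma cnt_succ (π : Equiv.Perm (Fin n)) (k : ℕ) (i : Fin n) :
    cnt π k ((i : ℕ) + 1) = cnt π k (i : ℕ) + (if ((π i : ℕ)) < k then 1 else 0) := by
  have h := sum_shift_one
    (fun q : Fin n => if (q : ℕ) < (i : ℕ) + 1 ∧ ((π q : ℕ)) < k then 1 else 0)
    (fun q : Fin n => if (q : ℕ) < (i : ℕ) ∧ ((π q : ℕ)) < k then 1 else 0) i
    (fun q hq => by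
      have hqi : (q : ℕ) ≠ (i : ℕ) := fun hh => hq (Fin.ext hh)
      have hiff : ((q : ℕ) < (i : ℕ) + 1 ∧ ((π q : ℕ)) < k)
          ↔ ((q : ℕ) < (i : ℕ) ∧ ((π q : ℕ)) < k) := by omega
      exact if_congr hiff rfl rfl)
  have hgi : (if (i : ℕ) < (i : ℕ) ∧ ((π i : ℕ)) < k then 1 else 0) = 0 := by simp
  have hfi : (if (i : ℕ) < (i : ℕ) + 1 ∧ ((π i : ℕ)) < k then 1 else 0)
      = (if ((π i : ℕ)) < k then 1 else 0) := by simp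
  rw [hgi, hfi] at h
  unfold cnt
  omega

lemma invNum_le (π : Equiv.Perm (Fin n)) : invNum π ≤ n * n := by
  have h := Finset.card_filter_le (univ : Finset (Fin n × Fin n))
    (fun p : Fin n × Fin n => p.1 < p.2 ∧ π p.2 < π p.1)
  unfold invNum
  simpa using h

end Stmt10Aux

namespace Stmt10Aux

variable {n : ℕ}
open Finset

lemma step_cnt_le_aux (a : Equiv.Perm (Fin n)) (i j : Fin n) (h : i < j)
    (hinv : invNum a < invNum (a * Equiv.swap i j)) (k l : ℕ) :
    cnt (a * Equiv.swap i j) k l ≤ cnt a k l := by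
  rcases lt_trichotomy (a i) (a j) with hv | hv | hv
  · exact cnt_swap_le a i j h hv k l
  · exact absurd (a.injective hv) h.ne
  · exfalso
    have hb1 : (a * Equiv.swap i j) i = a j := by
      rw [Equiv.Perm.mul_apply, Equiv.swap_apply_left]
    have hb2 : (a * Equiv.swap i j) j = a i := by
      rw [Equiv.Perm.mul_apply, Equiv.swap_apply_right]
    have h2 := invNum_lt_swap (a * Equiv.swap i j) i j h (by rw [hb1, hb2]; exact hv)
    rw [mul_assoc, Equiv.swap_mul_self, mul_one] at h2
    omega

lemma step_cnt_le (a b : Equiv.Perm (Fin n))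
    (hstep : (∃ i j : Fin n, i ≠ j ∧ b = a * Equiv.swap i j) ∧ invNum a < invNum b)
    (k l : ℕ) : cnt b k l ≤ cnt a k l := by
  obtain ⟨⟨i, j, hij, rfl⟩, hinv⟩ := hstep
  rcases lt_trichotomy i j with h | h | h
  · exact step_cnt_le_aux a i j h hinv k l
  · exact absurd h hij
  · rw [Equiv.swap_comm] at hinv ⊢
    exact step_cnt_le_aux a j i h hinv k l

lemma bruhat_forward (π σ : Equiv.Perm (Fin n)) (h : bruhatLE π σ) (k l : ℕ) :
    cnt σ k l ≤ cnt π k l := by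
  unfold bruhatLE at h
  induction h with
  | refl => exact le_rfl
  | tail hab hstep ih => exact le_trans (step_cnt_le _ _ hstep k l) ih

lemma exists_step (π σ : Equiv.Perm (Fin n)) (hne : π ≠ σ)
    (hD : ∀ k l, cnt σ k l ≤ cnt π k l) :
    ∃ i j : Fin n, i < j ∧ π i < π j ∧
      ∀ k l, cnt σ k l ≤ cnt (π * Equiv.swap i j) k l := by
  classical
  have hne' : (univ.filter fun q : Fin n => π q ≠ σ q).Nonempty := by
    by_contra hcon
    rw [Finset.not_nonempty_iff_eq_empty, Finset.filter_eq_empty_iff] at hcon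
    exact hne (Equiv.ext fun q => not_ne_iff.1 (hcon (mem_univ q)))
  obtain ⟨i, hi_mem, hi_min⟩ : ∃ i : Fin n, π i ≠ σ i ∧ ∀ q : Fin n, q < i → π q = σ q := by
    refine ⟨(univ.filter fun q : Fin n => π q ≠ σ q).min' hne',
      (Finset.mem_filter.1 (Finset.min'_mem _ hne')).2, ?_⟩
    intro q hq
    by_contra hcon
    have h2 := Finset.min'_le (univ.filter fun q : Fin n => π q ≠ σ q) q
      (Finset.mem_filter.2 ⟨mem_univ _, hcon⟩)
    exact absurd (lt_of_lt_of_le hq h2) (lt_irrefl _)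
  have hπσ : ((π i : ℕ)) < ((σ i : ℕ)) := by
    have h1 := hD ((σ i : ℕ) + 1) ((i : ℕ) + 1)
    rw [cnt_succ, cnt_succ] at h1
    have hp : cnt π ((σ i : ℕ) + 1) (i : ℕ) = cnt σ ((σ i : ℕ) + 1) (i : ℕ) :=
      cnt_prefix _ _ _ _ (fun q hq => hi_min q (Fin.lt_def.mpr hq))
    rw [hp] at h1
    have hne2 : (π i : ℕ) ≠ (σ i : ℕ) := fun hh => hi_mem (Fin.ext hh)
    split_ifs at h1 <;> omega
  have hjex : (univ.filter fun q : Fin n =>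
      i < q ∧ π i < π q ∧ ((π q : ℕ)) ≤ ((σ i : ℕ))).Nonempty := by
    refine ⟨π⁻¹ (σ i), Finset.mem_filter.2 ⟨mem_univ _, ?_, ?_, ?_⟩⟩
    · rcases lt_trichotomy (π⁻¹ (σ i)) i with h | h | h
      · exfalso
        have h2 := hi_min _ h
        have h3 : π (π⁻¹ (σ i)) = σ i := Equiv.apply_symm_apply π (σ i)
        have h4 : σ (π⁻¹ (σ i)) = σ i := by rw [← h2, h3]
        have h5 := σ.injective h4
        rw [h5] at h
        exact absurd h (lt_irrefl i)
      · exfalso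
        have h3 : π (π⁻¹ (σ i)) = σ i := Equiv.apply_symm_apply π (σ i)
        rw [h] at h3
        exact hi_mem h3
      · exact h
    · have h3 : π (π⁻¹ (σ i)) = σ i := Equiv.apply_symm_apply π (σ i)
      rw [h3]
      exact Fin.lt_def.mpr hπσ
    · rw [show π (π⁻¹ (σ i)) = σ i from Equiv.apply_symm_apply π (σ i)]
  obtain ⟨j, hij, hπij, hπjσ, hjmin⟩ : ∃ j : Fin n, i < j ∧ π i < π j ∧
      ((π j : ℕ)) ≤ ((σ i : ℕ)) ∧
      ∀ q : Fin n, i < q → π i < π q → ((π q : ℕ)) ≤ ((σ i : ℕ)) → j ≤ q := by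
    obtain ⟨-, h1, h2, h3⟩ := Finset.mem_filter.1 (Finset.min'_mem _ hjex)
    exact ⟨_, h1, h2, h3,
      fun q hq1 hq2 hq3 => Finset.min'_le _ q (Finset.mem_filter.2 ⟨mem_univ _, hq1, hq2, hq3⟩)⟩
  refine ⟨i, j, hij, hπij, ?_⟩
  intro k l
  rw [cnt_mul_swap]
  have key := sum_shift_two
    (fun r : Fin n => if ((Equiv.swap i j r : Fin n) : ℕ) < l ∧ ((π r : ℕ)) < k then 1 else 0)
    (fun r : Fin n => if (r : ℕ) < l ∧ ((π r : ℕ)) < k then 1 else 0) i j hij.ne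
    (fun q h1 h2 => by simp only [Equiv.swap_apply_of_ne_of_ne h1 h2])
  simp only [Equiv.swap_apply_left, Equiv.swap_apply_right] at key
  have hij' : (i : ℕ) < (j : ℕ) := hij
  have hπij' : ((π i : ℕ)) < ((π j : ℕ)) := hπij
  have hDkl := hD k l
  unfold cnt at hDkl ⊢
  by_cases hR : (i : ℕ) < l ∧ l ≤ (j : ℕ) ∧ ((π i : ℕ)) < k ∧ k ≤ ((π j : ℕ))
  · obtain ⟨hil, hlj, hik, hkj⟩ := hR
    have hkσ : k ≤ (σ i : ℕ) + 1 := by omega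
    have hsπ := cnt_split π hkσ l
    have hsσ := cnt_split σ hkσ l
    unfold cnt at hsπ hsσ
    have hCπ : (∑ q : Fin n,
          if (q : ℕ) < l ∧ k ≤ ((π q : ℕ)) ∧ ((π q : ℕ)) < (σ i : ℕ) + 1 then 1 else 0)
        = ∑ q : Fin n,
          if (q : ℕ) < (i : ℕ) ∧ k ≤ ((π q : ℕ)) ∧ ((π q : ℕ)) < (σ i : ℕ) + 1
            then 1 else 0 := by
      apply Finset.sum_congr rfl
      intro q _
      refine if_congr ?_ rfl rfl
      constructor
      · rintro ⟨h1, h2, h3⟩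
        refine ⟨?_, h2, h3⟩
        by_contra hq
        have hiq : (i : ℕ) ≤ (q : ℕ) := le_of_not_gt hq
        rcases eq_or_lt_of_le hiq with heq | hlt
        · have hqi : q = i := Fin.ext heq.symm
          rw [hqi] at h2
          omega
        · have hq1 : i < q := Fin.lt_def.mpr hlt
          have hq2 : π i < π q := Fin.lt_def.mpr (by omega)
          have hq3 : ((π q : ℕ)) ≤ ((σ i : ℕ)) := by omega
          have h4 := Fin.le_def.mp (hjmin q hq1 hq2 hq3)
          omega
      · rintro ⟨h1, h2, h3⟩
        exact ⟨by omega, h2, h3⟩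
    have hAB : (∑ q : Fin n,
          if (q : ℕ) < (i : ℕ) ∧ k ≤ ((σ q : ℕ)) ∧ ((σ q : ℕ)) < (σ i : ℕ) + 1
            then 1 else 0) + 1
        ≤ ∑ q : Fin n,
          if (q : ℕ) < l ∧ k ≤ ((σ q : ℕ)) ∧ ((σ q : ℕ)) < (σ i : ℕ) + 1 then 1 else 0 := by
      have h1 := Finset.add_sum_erase univ
        (fun q : Fin n =>
          if (q : ℕ) < l ∧ k ≤ ((σ q : ℕ)) ∧ ((σ q : ℕ)) < (σ i : ℕ) + 1 then 1 else 0)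
        (mem_univ i)
      have h2 := Finset.add_sum_erase univ
        (fun q : Fin n =>
          if (q : ℕ) < (i : ℕ) ∧ k ≤ ((σ q : ℕ)) ∧ ((σ q : ℕ)) < (σ i : ℕ) + 1 then 1 else 0)
        (mem_univ i)
      have h3 : (∑ q ∈ univ.erase i,
            if (q : ℕ) < (i : ℕ) ∧ k ≤ ((σ q : ℕ)) ∧ ((σ q : ℕ)) < (σ i : ℕ) + 1
              then 1 else 0)
          ≤ ∑ q ∈ univ.erase i,
            if (q : ℕ) < l ∧ k ≤ ((σ q : ℕ)) ∧ ((σ q : ℕ)) < (σ i : ℕ) + 1 then 1 else 0 := by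
        apply Finset.sum_le_sum
        intro q _
        split_ifs <;> omega
      have h4 : (if (i : ℕ) < l ∧ k ≤ ((σ i : ℕ)) ∧ ((σ i : ℕ)) < (σ i : ℕ) + 1
          then 1 else 0) = 1 := if_pos ⟨hil, by omega, by omega⟩
      have h5 : (if (i : ℕ) < (i : ℕ) ∧ k ≤ ((σ i : ℕ)) ∧ ((σ i : ℕ)) < (σ i : ℕ) + 1
          then 1 else 0) = 0 := by
        rw [if_neg]
        rintro ⟨hh, -⟩
        exact absurd hh (lt_irrefl _)
      omega
    have hBπ : (∑ q : Fin n,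
          if (q : ℕ) < (i : ℕ) ∧ k ≤ ((σ q : ℕ)) ∧ ((σ q : ℕ)) < (σ i : ℕ) + 1
            then 1 else 0)
        = ∑ q : Fin n,
          if (q : ℕ) < (i : ℕ) ∧ k ≤ ((π q : ℕ)) ∧ ((π q : ℕ)) < (σ i : ℕ) + 1
            then 1 else 0 := by
      apply Finset.sum_congr rfl
      intro q _
      by_cases hq : (q : ℕ) < (i : ℕ)
      · rw [hi_min q (Fin.lt_def.mpr hq)]
      · rw [if_neg (fun hh => hq hh.1), if_neg (fun hh => hq hh.1)]
    have hDKl := hD ((σ i : ℕ) + 1) l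
    unfold cnt at hDKl
    have hv1 : (if (i : ℕ) < l ∧ ((π i : ℕ)) < k then 1 else 0) = 1 := if_pos ⟨hil, hik⟩
    have hv2 : (if (j : ℕ) < l ∧ ((π j : ℕ)) < k then 1 else 0) = 0 := by
      rw [if_neg]
      rintro ⟨hh, -⟩
      omega
    have hv3 : (if (j : ℕ) < l ∧ ((π i : ℕ)) < k then 1 else 0) = 0 := by
      rw [if_neg]
      rintro ⟨hh, -⟩
      omega
    have hv4 : (if (i : ℕ) < l ∧ ((π j : ℕ)) < k then 1 else 0) = 0 := by
      rw [if_neg]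
      rintro ⟨-, hh⟩
      omega
    omega
  · have hswap : (if (j : ℕ) < l ∧ ((π i : ℕ)) < k then 1 else 0)
        + (if (i : ℕ) < l ∧ ((π j : ℕ)) < k then 1 else 0)
        = (if (i : ℕ) < l ∧ ((π i : ℕ)) < k then 1 else 0)
        + (if (j : ℕ) < l ∧ ((π j : ℕ)) < k then 1 else 0) := by
      split_ifs <;> omega
    omega

lemma bruhat_converse_aux (σ : Equiv.Perm (Fin n)) :
    ∀ (m : ℕ) (π : Equiv.Perm (Fin n)), n * n ≤ invNum π + m →
      (∀ k l, cnt σ k l ≤ cnt π k l) → bruhatLE π σ := by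
  intro m
  induction m with
  | zero =>
    intro π hm hD
    by_cases hne : π = σ
    · exact hne ▸ Relation.ReflTransGen.refl
    · exfalso
      obtain ⟨i, j, hij, hπij, -⟩ := exists_step π σ hne hD
      have h1 := invNum_lt_swap π i j hij hπij
      have h2 := invNum_le (π * Equiv.swap i j)
      omega
  | succ m ih =>
    intro π hm hD
    by_cases hne : π = σ
    · exact hne ▸ Relation.ReflTransGen.refl
    · obtain ⟨i, j, hij, hπij, hD'⟩ := exists_step π σ hne hD
      have h1 := invNum_lt_swap π i j hij hπij
      exact Relation.ReflTransGen.head ⟨⟨i, j, hij.ne, rfl⟩, h1⟩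
        (ih (π * Equiv.swap i j) (by omega) hD')

end Stmt10Aux

theorem stmt10 {n : ℕ} (π σ : Equiv.Perm (Fin n)) :
    bruhatLE π σ ↔
      ∀ k l : ℕ, rcEntry (permMatrix σ) k l ≤ rcEntry (permMatrix π) k l := by
  constructor
  · intro h k l
    rw [Stmt10Aux.rcEntry_permMatrix, Stmt10Aux.rcEntry_permMatrix]
    exact Stmt10Aux.bruhat_forward π σ h k l
  · intro h
    refine Stmt10Aux.bruhat_converse_aux σ (n * n) π (by omega) ?_
    intro k l
    rw [← Stmt10Aux.rcEntry_permMatrix, ← Stmt10Aux.rcEntry_permMatrix]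
    exact h k l
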